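/- Let R be a random RR set (generated for a uniformly random node v on an independently sampled edge-percolated subgraph of G), and for a node set S let F(S) be the indicator that S intersects R. Then n · E[F(S)] = E[I(S)], where I(S) is the number of nodes activated by seed set S in the independent cascade process on G and n is the number of nodes of G. -/

import Mathlib

open MeasureTheory ProbabilityTheory
open scoped Classical

/-- Corollary 1 of Tang–Xiao–Shi: `n · E[F(S)] = E[I(S)]`, where `F(S)` is the indicator that
`S` intersects a random RR set (generated for a uniformly random node `v` on an edge-percolated
subgraph of `G`), and `I(S)` is the number of nodes activated by seed set `S` in the independent
cascade process, i.e. the number of nodes reachable from `S` in the percolated subgraph. -/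
theorem n_mul_expected_coverage_eq_expected_spread
    {V : Type*} [Fintype V] [Nonempty V] [MeasurableSpace V] [MeasurableSingletonClass V]
    (E : V → V → Prop)
    (μ : Measure (V → V → Bool)) [IsProbabilityMeasure μ]
    (S : Set V) :
    (Fintype.card V : ℝ) *
      ∫ x, (if (S ∩ {u | Relation.ReflTransGen
              (fun a b => E a b ∧ x.1 a b = true) u x.2}).Nonempty then (1:ℝ) else 0)
        ∂(μ.prod (PMF.uniformOfFintype V).toMeasure)
    = ∫ ω, ((Finset.univ.filter (fun v : V => ∃ u ∈ S,
          Relation.ReflTransGen (fun a b => E a b ∧ ω a b = true) u v)).card : ℝ) ∂μ := by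
  set f : (V → V → Bool) × V → ℝ := fun p =>
    (if (S ∩ {u | Relation.ReflTransGen
        (fun a b => E a b ∧ p.1 a b = true) u p.2}).Nonempty then (1:ℝ) else 0) with hf
  have hint : Integrable f (μ.prod (PMF.uniformOfFintype V).toMeasure) := .of_finite
  rw [show (∫ x, (if (S ∩ {u | Relation.ReflTransGen
        (fun a b => E a b ∧ x.1 a b = true) u x.2}).Nonempty then (1:ℝ) else 0)
      ∂(μ.prod (PMF.uniformOfFintype V).toMeasure)) = ∫ p, f p
      ∂(μ.prod (PMF.uniformOfFintype V).toMeasure) from rfl,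
    MeasureTheory.integral_prod f hint, ← integral_const_mul]
  refine integral_congr_ae (Filter.Eventually.of_forall fun ω => ?_)
  dsimp only
  rw [MeasureTheory.integral_fintype Integrable.of_finite]
  have hm : ∀ v : V, (((PMF.uniformOfFintype V).toMeasure {v}).toReal) = (Fintype.card V : ℝ)⁻¹ := by
    intro v
    rw [PMF.toMeasure_apply_singleton _ _ (measurableSet_singleton v),
      PMF.uniformOfFintype_apply]
    simp
  simp only [Measure.real, hm, smul_eq_mul, ← Finset.mul_sum]
  rw [← mul_assoc, mul_inv_cancel₀ (by positivity), one_mul]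
  have : ∀ v : V, f (ω, v) = if v ∈ Finset.univ.filter (fun v : V => ∃ u ∈ S,
      Relation.ReflTransGen (fun a b => E a b ∧ ω a b = true) u v) then (1:ℝ) else 0 := by
    intro v
    simp [hf, Set.inter_nonempty, Finset.mem_filter]
  simp only [this, Finset.sum_ite_mem, Finset.univ_inter, Finset.sum_const, nsmul_eq_mul, mul_one]
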